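/- Let α̂ ∈ (0, 1] and ρ ∈ R_c be given by ρ(v) = α̂ · v · (|log v| + 1) for v > 0 and ρ(0) = 0. Then Φ_ρ(0) = −∞ and Φ_ρ(∞) = ∞, so that D_ρ = [0, ∞)², and for all v > 0 and w ≥ 0: Ψ_ρ(v, w) = exp((1 + log v)·e^{α̂ w} − 1) if v ≥ 1; Ψ_ρ(v, w) = exp(e^{α̂ w}/(1 − log v) − 1) if exp(1 − e^{α̂ w}) ≤ v < 1; and Ψ_ρ(v, w) = exp(1 − (1 − log v)·e^{−α̂ w}) if v < exp(1 − e^{α̂ w}). -/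

import Mathlib

open MeasureTheory Filter Set

/-- `Φ_ρ(w) = ∫_1^w 1/ρ(v) dv` for `ρ ∈ R_c`. -/
noncomputable def Phi (ρ : ℝ → ℝ) (w : ℝ) : ℝ := ∫ v in (1:ℝ)..w, 1 / ρ v

/-- `Φ_ρ(0) = lim_{v↓0} Φ_ρ(v) ∈ [-∞, ∞)`, realised as an infimum in `EReal`. -/
noncomputable def Phi0 (ρ : ℝ → ℝ) : EReal :=
  sInf ((fun u => ((Phi ρ u : ℝ) : EReal)) '' Set.Ioi (0:ℝ))

/-- `Φ_ρ(∞) = lim_{v↑∞} Φ_ρ(v) ∈ (-∞, ∞]`, realised as a supremum in `EReal`. -/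
noncomputable def PhiInfty (ρ : ℝ → ℝ) : EReal :=
  sSup ((fun u => ((Phi ρ u : ℝ) : EReal)) '' Set.Ioi (0:ℝ))

/-- The `EReal`-valued extension of `Φ_ρ` to `[0,∞)`. -/
noncomputable def PhiE (ρ : ℝ → ℝ) (v : ℝ) : EReal :=
  if v = 0 then Phi0 ρ else ((Phi ρ v : ℝ) : EReal)

/-- `D_ρ`, the set of all `(v,w) ∈ [0,∞)²` with `Φ_ρ(v) + w < Φ_ρ(∞)`. -/
def Drho (ρ : ℝ → ℝ) : Set (ℝ × ℝ) :=
  {q | 0 ≤ q.1 ∧ 0 ≤ q.2 ∧ PhiE ρ q.1 + (q.2 : EReal) < PhiInfty ρ}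

/-- `Ψ_ρ(v,w) = Φ_ρ⁻¹(Φ_ρ(v) + w)`, where `Φ_ρ⁻¹` is extended by one-sided limits,
realised as `sup {u > 0 | Φ_ρ(u) ≤ Φ_ρ(v) + w}` (with `sup ∅ = 0`). -/
noncomputable def Psi (ρ : ℝ → ℝ) (v w : ℝ) : ℝ :=
  sSup {u : ℝ | 0 < u ∧ ((Phi ρ u : ℝ) : EReal) ≤ PhiE ρ v + (w : EReal)}

section AuxLemmas

variable {α : ℝ} {ρ : ℝ → ℝ}

lemma aux_denom_pos (hα : 0 < α) {v : ℝ} (hv : 0 < v) :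
    0 < α * v * (|Real.log v| + 1) := by
  have h : (0:ℝ) < |Real.log v| + 1 := by positivity
  positivity

lemma aux_contOn (hα : 0 < α)
    (hρ : ∀ v > (0:ℝ), ρ v = α * v * (|Real.log v| + 1)) :
    ContinuousOn (fun v => 1 / ρ v) (Set.Ioi (0:ℝ)) := by
  have h1 : ContinuousOn (fun v : ℝ => 1 / (α * v * (|Real.log v| + 1))) (Set.Ioi (0:ℝ)) := by
    apply ContinuousOn.div continuousOn_const
    · exact (continuousOn_const.mul continuousOn_id).mul
        (((Real.continuousOn_log.mono (by intro x hx; simp at hx ⊢; exact ne_of_gt hx)).abs).add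
          continuousOn_const)
    · intro x hx
      exact (aux_denom_pos hα hx).ne'
  exact h1.congr (fun x hx => by rw [hρ x hx])

lemma aux_intInt (hα : 0 < α)
    (hρ : ∀ v > (0:ℝ), ρ v = α * v * (|Real.log v| + 1))
    {a b : ℝ} (ha : 0 < a) (hb : 0 < b) :
    IntervalIntegrable (fun v => 1 / ρ v) volume a b := by
  apply ((aux_contOn hα hρ).mono ?_).intervalIntegrable
  intro x hx
  rw [Set.mem_uIcc] at hx
  rcases hx with ⟨h1, _⟩ | ⟨h1, _⟩
  · exact lt_of_lt_of_le ha h1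
  · exact lt_of_lt_of_le hb h1

lemma aux_phi_of_one_le (hα : 0 < α)
    (hρ : ∀ v > (0:ℝ), ρ v = α * v * (|Real.log v| + 1))
    {w : ℝ} (hw : 1 ≤ w) :
    Phi ρ w = α⁻¹ * Real.log (1 + Real.log w) := by
  have hmem : ∀ x ∈ Set.uIcc (1:ℝ) w, 0 < x ∧ 0 ≤ Real.log x := by
    intro x hx
    rw [Set.uIcc_of_le hw] at hx
    exact ⟨lt_of_lt_of_le one_pos hx.1, Real.log_nonneg hx.1⟩
  have hcongr : Set.EqOn (fun x => 1 / ρ x) (fun x => 1 / (α * x * (Real.log x + 1)))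
      (Set.uIcc (1:ℝ) w) := by
    intro x hx
    obtain ⟨hx0, hlx⟩ := hmem x hx
    simp only
    rw [hρ x hx0, abs_of_nonneg hlx]
  have hderiv : ∀ x ∈ Set.uIcc (1:ℝ) w,
      HasDerivAt (fun x => α⁻¹ * Real.log (1 + Real.log x))
        (1 / (α * x * (Real.log x + 1))) x := by
    intro x hx
    obtain ⟨hx0, hlx⟩ := hmem x hx
    have h : HasDerivAt (fun x : ℝ => 1 + Real.log x) (1/x) x := by
      simpa using (Real.hasDerivAt_log hx0.ne').const_add 1
    have h2 : HasDerivAt (fun x : ℝ => Real.log (1 + Real.log x))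
        ((1/x) / (1 + Real.log x)) x := h.log (by linarith)
    have h3 := h2.const_mul α⁻¹
    exact h3.congr_deriv (by simp only [one_div, div_eq_mul_inv, mul_inv]; ring)
  have hint : IntervalIntegrable (fun x : ℝ => 1 / (α * x * (Real.log x + 1))) volume 1 w := by
    apply ContinuousOn.intervalIntegrable
    apply ContinuousOn.div continuousOn_const
    · apply (continuousOn_const.mul continuousOn_id).mul
      apply ContinuousOn.add ?_ continuousOn_const
      apply Real.continuousOn_log.mono
      intro x hx
      exact ne_of_gt (hmem x hx).1
    · intro x hx
      obtain ⟨hx0, hlx⟩ := hmem x hx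
      have : (0:ℝ) < Real.log x + 1 := by linarith
      positivity
  have := intervalIntegral.integral_eq_sub_of_hasDerivAt hderiv hint
  unfold Phi
  rw [intervalIntegral.integral_congr hcongr, this]
  simp

lemma aux_phi_of_le_one (hα : 0 < α)
    (hρ : ∀ v > (0:ℝ), ρ v = α * v * (|Real.log v| + 1))
    {w : ℝ} (hw0 : 0 < w) (hw : w ≤ 1) :
    Phi ρ w = -(α⁻¹ * Real.log (1 - Real.log w)) := by
  have hmem : ∀ x ∈ Set.uIcc (1:ℝ) w, 0 < x ∧ Real.log x ≤ 0 := by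
    intro x hx
    rw [Set.uIcc_of_ge hw] at hx
    exact ⟨lt_of_lt_of_le hw0 hx.1, Real.log_nonpos (le_of_lt (lt_of_lt_of_le hw0 hx.1)) hx.2⟩
  have hcongr : Set.EqOn (fun x => 1 / ρ x) (fun x => 1 / (α * x * (1 - Real.log x)))
      (Set.uIcc (1:ℝ) w) := by
    intro x hx
    obtain ⟨hx0, hlx⟩ := hmem x hx
    simp only
    rw [hρ x hx0, abs_of_nonpos hlx]
    ring_nf
  have hderiv : ∀ x ∈ Set.uIcc (1:ℝ) w,
      HasDerivAt (fun x => -(α⁻¹ * Real.log (1 - Real.log x)))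
        (1 / (α * x * (1 - Real.log x))) x := by
    intro x hx
    obtain ⟨hx0, hlx⟩ := hmem x hx
    have h : HasDerivAt (fun x : ℝ => 1 - Real.log x) (-(1/x)) x := by
      simpa using (Real.hasDerivAt_log hx0.ne').const_sub 1
    have h2 : HasDerivAt (fun x : ℝ => Real.log (1 - Real.log x))
        ((-(1/x)) / (1 - Real.log x)) x := h.log (by linarith)
    have h3 := (h2.const_mul α⁻¹).neg
    exact h3.congr_deriv (by simp only [one_div, div_eq_mul_inv, mul_inv]; ring)
  have hint : IntervalIntegrable (fun x : ℝ => 1 / (α * x * (1 - Real.log x))) volume 1 w := by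
    apply ContinuousOn.intervalIntegrable
    apply ContinuousOn.div continuousOn_const
    · apply (continuousOn_const.mul continuousOn_id).mul
      apply ContinuousOn.sub continuousOn_const
      apply Real.continuousOn_log.mono
      intro x hx
      exact ne_of_gt (hmem x hx).1
    · intro x hx
      obtain ⟨hx0, hlx⟩ := hmem x hx
      have : (0:ℝ) < 1 - Real.log x := by linarith
      positivity
  have := intervalIntegral.integral_eq_sub_of_hasDerivAt hderiv hint
  unfold Phi
  rw [intervalIntegral.integral_congr hcongr, this]
  simp

lemma aux_phi_strictMono (hα : 0 < α)
    (hρ : ∀ v > (0:ℝ), ρ v = α * v * (|Real.log v| + 1)) :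
    StrictMonoOn (Phi ρ) (Set.Ioi (0:ℝ)) := by
  intro a ha b hb hab
  rw [Set.mem_Ioi] at ha hb
  have h1 : Phi ρ b - Phi ρ a = ∫ x in a..b, 1 / ρ x :=
    intervalIntegral.integral_interval_sub_left (aux_intInt hα hρ one_pos hb)
      (aux_intInt hα hρ one_pos ha)
  have h2 : 0 < ∫ x in a..b, 1 / ρ x := by
    apply intervalIntegral.intervalIntegral_pos_of_pos_on (aux_intInt hα hρ ha hb) _ hab
    intro x hx
    have hx0 : 0 < x := lt_trans ha hx.1
    rw [hρ x hx0]
    exact one_div_pos.mpr (aux_denom_pos hα hx0)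
  linarith

end AuxLemmas

section Aux2

variable {α : ℝ} {ρ : ℝ → ℝ}

lemma aux_psi_eq (hα : 0 < α)
    (hρ : ∀ v > (0:ℝ), ρ v = α * v * (|Real.log v| + 1))
    {v w t : ℝ} (hv : 0 < v) (ht : 0 < t) (hEq : Phi ρ t = Phi ρ v + w) :
    Psi ρ v w = t := by
  unfold Psi
  have hset : {u : ℝ | 0 < u ∧ ((Phi ρ u : ℝ) : EReal) ≤ PhiE ρ v + (w : EReal)}
      = Set.Ioc 0 t := by
    ext u
    simp only [Set.mem_setOf_eq, Set.mem_Ioc, PhiE, if_neg hv.ne']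
    rw [← EReal.coe_add, EReal.coe_le_coe_iff, ← hEq]
    constructor
    · rintro ⟨hu, hle⟩
      exact ⟨hu, ((aux_phi_strictMono hα hρ).le_iff_le hu ht).mp hle⟩
    · rintro ⟨hu, hle⟩
      exact ⟨hu, ((aux_phi_strictMono hα hρ).le_iff_le hu ht).mpr hle⟩
  rw [hset]
  exact csSup_Ioc ht

lemma aux_phi0_bot (hα : 0 < α)
    (hρ : ∀ v > (0:ℝ), ρ v = α * v * (|Real.log v| + 1)) :
    Phi0 ρ = ⊥ := by
  rw [Phi0, sInf_eq_bot]
  intro b hb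
  induction b with
  | bot => exact absurd hb (lt_irrefl _)
  | top =>
    refine ⟨((Phi ρ 1 : ℝ) : EReal), ⟨1, Set.mem_Ioi.mpr one_pos, rfl⟩, ?_⟩
    exact EReal.coe_lt_top _
  | coe M =>
    set M' : ℝ := min M 0 with hM'
    set u : ℝ := Real.exp (1 - Real.exp (-α * (M' - 1))) with hu
    have hu0 : 0 < u := Real.exp_pos _
    have hM'0 : M' ≤ 0 := min_le_right _ _
    have hexp1 : (1:ℝ) ≤ Real.exp (-α * (M' - 1)) := by
      rw [Real.one_le_exp_iff]
      nlinarith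
    have hu1 : u ≤ 1 := by
      rw [hu]
      rw [Real.exp_le_one_iff]
      linarith
    have hval : Phi ρ u = M' - 1 := by
      rw [aux_phi_of_le_one hα hρ hu0 hu1, hu, Real.log_exp]
      have : (1:ℝ) - (1 - Real.exp (-α * (M' - 1))) = Real.exp (-α * (M' - 1)) := by ring
      rw [this, Real.log_exp]
      field_simp
    refine ⟨((Phi ρ u : ℝ) : EReal), ⟨u, Set.mem_Ioi.mpr hu0, rfl⟩, ?_⟩
    rw [EReal.coe_lt_coe_iff, hval]
    have : M' ≤ M := min_le_left _ _
    linarith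

lemma aux_phiInfty_top (hα : 0 < α)
    (hρ : ∀ v > (0:ℝ), ρ v = α * v * (|Real.log v| + 1)) :
    PhiInfty ρ = ⊤ := by
  rw [PhiInfty, sSup_eq_top]
  intro b hb
  induction b with
  | top => exact absurd hb (lt_irrefl _)
  | bot =>
    refine ⟨((Phi ρ 1 : ℝ) : EReal), ⟨1, Set.mem_Ioi.mpr one_pos, rfl⟩, ?_⟩
    exact EReal.bot_lt_coe _
  | coe M =>
    set M' : ℝ := max M 0 with hM'
    set u : ℝ := Real.exp (Real.exp (α * (M' + 1)) - 1) with hu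
    have hu0 : 0 < u := Real.exp_pos _
    have hM'0 : 0 ≤ M' := le_max_right _ _
    have hexp1 : (1:ℝ) ≤ Real.exp (α * (M' + 1)) := by
      rw [Real.one_le_exp_iff]
      nlinarith
    have hu1 : 1 ≤ u := by
      rw [hu]
      rw [Real.one_le_exp_iff]
      linarith
    have hval : Phi ρ u = M' + 1 := by
      rw [aux_phi_of_one_le hα hρ hu1, hu, Real.log_exp]
      have : (1:ℝ) + (Real.exp (α * (M' + 1)) - 1) = Real.exp (α * (M' + 1)) := by ring
      rw [this, Real.log_exp]
      field_simp
    refine ⟨((Phi ρ u : ℝ) : EReal), ⟨u, Set.mem_Ioi.mpr hu0, rfl⟩, ?_⟩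
    rw [EReal.coe_lt_coe_iff, hval]
    have : M ≤ M' := le_max_left _ _
    linarith

lemma aux_drho (hα : 0 < α)
    (hρ : ∀ v > (0:ℝ), ρ v = α * v * (|Real.log v| + 1)) :
    Drho ρ = Set.Ici (0:ℝ) ×ˢ Set.Ici (0:ℝ) := by
  ext ⟨v, w⟩
  simp only [Drho, Set.mem_setOf_eq, Set.mem_prod, Set.mem_Ici]
  constructor
  · rintro ⟨h1, h2, _⟩; exact ⟨h1, h2⟩
  · rintro ⟨h1, h2⟩
    refine ⟨h1, h2, ?_⟩
    rw [aux_phiInfty_top hα hρ]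
    apply EReal.add_lt_top _ (EReal.coe_ne_top w)
    by_cases hv : v = 0
    · rw [PhiE, if_pos hv, aux_phi0_bot hα hρ]
      exact bot_ne_top
    · rw [PhiE, if_neg hv]
      exact EReal.coe_ne_top _

end Aux2

section Aux3

variable {α : ℝ} {ρ : ℝ → ℝ}

lemma aux_main (hα : 0 < α)
    (hρ : ∀ v > (0:ℝ), ρ v = α * v * (|Real.log v| + 1)) :
    ∀ v > (0:ℝ), ∀ w ≥ (0:ℝ),
      (1 ≤ v → Psi ρ v w = Real.exp ((1 + Real.log v) * Real.exp (α * w) - 1)) ∧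
      (Real.exp (1 - Real.exp (α * w)) ≤ v → v < 1 →
        Psi ρ v w = Real.exp (Real.exp (α * w) / (1 - Real.log v) - 1)) ∧
      (v < Real.exp (1 - Real.exp (α * w)) →
        Psi ρ v w = Real.exp (1 - (1 - Real.log v) * Real.exp (-(α * w)))) := by
  intro v hv w hw
  set E : ℝ := Real.exp (α * w) with hE
  have hE1 : 1 ≤ E := by rw [hE, Real.one_le_exp_iff]; positivity
  have hE0 : 0 < E := Real.exp_pos _
  have hlogE : Real.log E = α * w := Real.log_exp _
  refine ⟨?_, ?_, ?_⟩
  · -- case 1 ≤ v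
    intro hv1
    set t : ℝ := Real.exp ((1 + Real.log v) * E - 1) with htdef
    have hlv : 0 ≤ Real.log v := Real.log_nonneg hv1
    have ht1 : 1 ≤ t := by
      rw [htdef, Real.one_le_exp_iff]
      nlinarith
    apply aux_psi_eq hα hρ hv (Real.exp_pos _)
    rw [aux_phi_of_one_le hα hρ ht1, aux_phi_of_one_le hα hρ hv1, htdef, Real.log_exp]
    have h1 : (1:ℝ) + ((1 + Real.log v) * E - 1) = (1 + Real.log v) * E := by ring
    rw [h1, Real.log_mul (by linarith) hE0.ne', hlogE]
    field_simp
  · -- case exp(1-E) ≤ v < 1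
    intro hv1 hv2
    set t : ℝ := Real.exp (E / (1 - Real.log v) - 1) with htdef
    have hlv : Real.log v < 0 := Real.log_neg hv hv2
    have hlow : 1 - E ≤ Real.log v := (Real.le_log_iff_exp_le hv).mpr hv1
    have hden : 0 < 1 - Real.log v := by linarith
    have ht1 : 1 ≤ t := by
      rw [htdef, Real.one_le_exp_iff]
      have : 1 ≤ E / (1 - Real.log v) := (one_le_div hden).mpr (by linarith)
      linarith
    apply aux_psi_eq hα hρ hv (Real.exp_pos _)
    rw [aux_phi_of_one_le hα hρ ht1, aux_phi_of_le_one hα hρ hv (le_of_lt hv2), htdef,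
      Real.log_exp]
    have h1 : (1:ℝ) + (E / (1 - Real.log v) - 1) = E / (1 - Real.log v) := by ring
    rw [h1, Real.log_div hE0.ne' hden.ne', hlogE]
    field_simp
    ring
  · -- case v < exp(1-E)
    intro hv3
    set E' : ℝ := Real.exp (-(α * w)) with hE'
    have hEE' : E * E' = 1 := by
      rw [hE, hE', ← Real.exp_add]
      simp
    set t : ℝ := Real.exp (1 - (1 - Real.log v) * E') with htdef
    have hup : Real.log v < 1 - E := by rw [← Real.log_exp (1 - E)]; exact Real.log_lt_log hv hv3
    have hden : E < 1 - Real.log v := by linarith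
    have hden0 : 0 < 1 - Real.log v := by linarith
    have hE'0 : 0 < E' := Real.exp_pos _
    have hgt1 : 1 < (1 - Real.log v) * E' := by
      calc (1:ℝ) = E * E' := hEE'.symm
      _ < (1 - Real.log v) * E' := by
          apply mul_lt_mul_of_pos_right hden hE'0
    have ht1 : t ≤ 1 := by
      rw [htdef, Real.exp_le_one_iff]
      linarith
    apply aux_psi_eq hα hρ hv (Real.exp_pos _)
    rw [aux_phi_of_le_one hα hρ (Real.exp_pos _) ht1,
      aux_phi_of_le_one hα hρ hv (le_of_lt (by
        calc v < Real.exp (1 - E) := hv3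
        _ ≤ 1 := by rw [Real.exp_le_one_iff]; linarith)), Real.log_exp]
    have h1 : (1:ℝ) - (1 - (1 - Real.log v) * E') = (1 - Real.log v) * E' := by ring
    rw [h1, Real.log_mul hden0.ne' hE'0.ne', hE', Real.log_exp]
    field_simp
    ring
end Aux3

/-- Example 3.4 of the paper: for `ρ(v) = αhat v (|log v| + 1)` with `αhat ∈ (0,1]` one has
`Φ_ρ(0) = -∞`, `Φ_ρ(∞) = ∞` (hence `D_ρ = [0,∞)²`) and the displayed explicit formula
for `Ψ_ρ(v,w)`. -/
theorem stmt_3 (αhat : ℝ) (hαhat : αhat ∈ Set.Ioc (0:ℝ) 1) (ρ : ℝ → ℝ)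
    (hρ : ∀ v > (0:ℝ), ρ v = αhat * v * (|Real.log v| + 1)) (hρ0 : ρ 0 = 0) :
    Phi0 ρ = ⊥ ∧ PhiInfty ρ = ⊤ ∧
    Drho ρ = Set.Ici (0:ℝ) ×ˢ Set.Ici (0:ℝ) ∧
    ∀ v > (0:ℝ), ∀ w ≥ (0:ℝ),
      (1 ≤ v → Psi ρ v w = Real.exp ((1 + Real.log v) * Real.exp (αhat * w) - 1)) ∧
      (Real.exp (1 - Real.exp (αhat * w)) ≤ v → v < 1 →
        Psi ρ v w = Real.exp (Real.exp (αhat * w) / (1 - Real.log v) - 1)) ∧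
      (v < Real.exp (1 - Real.exp (αhat * w)) →
        Psi ρ v w = Real.exp (1 - (1 - Real.log v) * Real.exp (-(αhat * w)))) := by
  obtain ⟨hα, -⟩ := hαhat
  exact ⟨aux_phi0_bot hα hρ, aux_phiInfty_top hα hρ, aux_drho hα hρ, aux_main hα hρ⟩
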